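/- arXiv:0902.1592 — 3 statements merged into one kernel-verified Lean document; each statement's English description precedes it below -/
import Mathlib

section
/- The positive part W_+ of W(2,2) is generated as a Lie algebra by the four elements L_1, L_2, W_1, W_2. -/
/-- The `W`-algebra `W(2,2)`: a complex Lie algebra with basis
`{L n, W n : n ∈ ℤ} ∪ {z}` (indexed by `(Bool × ℤ) ⊕ Unit`, where `(true, n)` corresponds
to `L n`, `(false, n)` to `W n` and `Sum.inr ()` to `z`) and brackets
`[L n, L m] = (m-n)•L (n+m) + ((n³-n)/12)δ_{n+m,0}•z`,
`[L n, W m] = (m-n)•W (n+m) + ((n³-n)/12)δ_{n+m,0}•z`,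
`[W n, W m] = [z, L m] = [z, W m] = 0`. -/
structure W22 where
  carrier : Type
  [isLieRing : LieRing carrier]
  [isLieAlgebra : LieAlgebra ℂ carrier]
  L : ℤ → carrier
  W : ℤ → carrier
  z : carrier
  basis : Module.Basis ((Bool × ℤ) ⊕ Unit) ℂ carrier
  basis_eq : ∀ i, basis i = Sum.elim (fun p => if p.1 then L p.2 else W p.2) (fun _ => z) i
  bracket_LL : ∀ n m : ℤ, ⁅L n, L m⁆ =
    ((m : ℂ) - n) • L (n + m) + (if n + m = 0 then (((n : ℂ) ^ 3 - n) / 12) else 0) • z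
  bracket_LW : ∀ n m : ℤ, ⁅L n, W m⁆ =
    ((m : ℂ) - n) • W (n + m) + (if n + m = 0 then (((n : ℂ) ^ 3 - n) / 12) else 0) • z
  bracket_WW : ∀ n m : ℤ, ⁅W n, W m⁆ = 0
  bracket_zL : ∀ m : ℤ, ⁅z, L m⁆ = 0
  bracket_zW : ∀ m : ℤ, ⁅z, W m⁆ = 0

attribute [instance] W22.isLieRing W22.isLieAlgebra

/-- The positive part `W_+ = span{L n, W n : n ≥ 1}` of `W(2,2)` is generated as a Lie
algebra by the four elements `L 1, L 2, W 1, W 2`. -/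
theorem w22_plus_generated (g : W22) :
    (LieSubalgebra.lieSpan ℂ g.carrier {g.L 1, g.L 2, g.W 1, g.W 2}).toSubmodule =
      Submodule.span ℂ {v | ∃ n : ℤ, 1 ≤ n ∧ (v = g.L n ∨ v = g.W n)} := by
  set P := Submodule.span ℂ {v | ∃ n : ℤ, 1 ≤ n ∧ (v = g.L n ∨ v = g.W n)} with hP
  have hLmem : ∀ n : ℤ, 1 ≤ n → g.L n ∈ P := fun n hn =>
    Submodule.subset_span ⟨n, hn, Or.inl rfl⟩
  have hWmem : ∀ n : ℤ, 1 ≤ n → g.W n ∈ P := fun n hn =>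
    Submodule.subset_span ⟨n, hn, Or.inr rfl⟩
  have key : ∀ x ∈ P, ∀ y ∈ P, ⁅x, y⁆ ∈ P := by
    intro x hx
    induction hx using Submodule.span_induction with
    | mem x hx =>
      intro y hy
      induction hy using Submodule.span_induction with
      | mem y hy =>
        obtain ⟨n, hn, hx⟩ := hx
        obtain ⟨m, hm, hy⟩ := hy
        have hnm : n + m ≠ 0 := by omega
        have hmn : m + n ≠ 0 := by omega
        rcases hx with rfl | rfl <;> rcases hy with rfl | rfl
        · rw [g.bracket_LL n m, if_neg hnm, zero_smul, add_zero]
          exact Submodule.smul_mem _ _ (hLmem _ (by omega))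
        · rw [g.bracket_LW n m, if_neg hnm, zero_smul, add_zero]
          exact Submodule.smul_mem _ _ (hWmem _ (by omega))
        · rw [← lie_skew, g.bracket_LW m n, if_neg hmn, zero_smul, add_zero]
          exact Submodule.neg_mem _ (Submodule.smul_mem _ _ (hWmem _ (by omega)))
        · rw [g.bracket_WW]; exact Submodule.zero_mem _
      | zero => rw [lie_zero]; exact Submodule.zero_mem _
      | add y z _ _ h1 h2 => rw [lie_add]; exact Submodule.add_mem _ h1 h2
      | smul c y _ h1 => rw [lie_smul]; exact Submodule.smul_mem _ _ h1
    | zero => intro y hy; rw [zero_lie]; exact Submodule.zero_mem _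
    | add x z _ _ h1 h2 =>
      intro y hy; rw [add_lie]; exact Submodule.add_mem _ (h1 y hy) (h2 y hy)
    | smul c x _ h1 =>
      intro y hy; rw [smul_lie]; exact Submodule.smul_mem _ _ (h1 y hy)
  let S : LieSubalgebra ℂ g.carrier :=
    { toSubmodule := P
      lie_mem' := fun {x y} hx hy => key x hx y hy }
  set G := LieSubalgebra.lieSpan ℂ g.carrier {g.L 1, g.L 2, g.W 1, g.W 2} with hG
  have hL1 : g.L 1 ∈ G := LieSubalgebra.subset_lieSpan (by simp)
  have hL2 : g.L 2 ∈ G := LieSubalgebra.subset_lieSpan (by simp)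
  have hW1 : g.W 1 ∈ G := LieSubalgebra.subset_lieSpan (by simp)
  have hW2 : g.W 2 ∈ G := LieSubalgebra.subset_lieSpan (by simp)
  have main : ∀ n : ℤ, 2 ≤ n → g.L n ∈ G ∧ g.W n ∈ G := by
    refine fun n => Int.le_induction (motive := fun k _ => g.L k ∈ G ∧ g.W k ∈ G) ⟨hL2, hW2⟩ (fun n hn ih => ?_) n
    · obtain ⟨hL, hW⟩ := ih
      have h0 : (1 : ℤ) + n ≠ 0 := by omega
      have h1 : ((n : ℂ) - 1) ≠ 0 := by
        have : (n : ℂ) ≠ 1 := by exact_mod_cast (by omega : n ≠ 1)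
        exact sub_ne_zero.mpr this
      have hbL : ⁅g.L 1, g.L n⁆ = ((n : ℂ) - 1) • g.L (n + 1) := by
        rw [g.bracket_LL 1 n, if_neg h0, zero_smul, add_zero, add_comm]
        norm_num
      have hbW : ⁅g.L 1, g.W n⁆ = ((n : ℂ) - 1) • g.W (n + 1) := by
        rw [g.bracket_LW 1 n, if_neg h0, zero_smul, add_zero, add_comm]
        norm_num
      constructor
      · have : g.L (n + 1) = ((n : ℂ) - 1)⁻¹ • ⁅g.L 1, g.L n⁆ := by
          rw [hbL, smul_smul, inv_mul_cancel₀ h1, one_smul]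
        rw [this]; exact G.smul_mem _ (G.lie_mem hL1 hL)
      · have : g.W (n + 1) = ((n : ℂ) - 1)⁻¹ • ⁅g.L 1, g.W n⁆ := by
          rw [hbW, smul_smul, inv_mul_cancel₀ h1, one_smul]
        rw [this]; exact G.smul_mem _ (G.lie_mem hL1 hW)
  apply le_antisymm
  · have hle : G ≤ S := by
      apply (LieSubalgebra.lieSpan_le).mpr
      intro v hv
      rcases hv with rfl | rfl | rfl | rfl
      · exact hLmem 1 le_rfl
      · exact hLmem 2 (by norm_num)
      · exact hWmem 1 le_rfl
      · exact hWmem 2 (by norm_num)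
    intro x hx
    exact hle hx
  · rw [Submodule.span_le]
    rintro v ⟨n, hn, hv | hv⟩ <;> subst hv
    · rcases eq_or_lt_of_le hn with h | h
      · rw [← h]; exact hL1
      · exact (main n (by omega)).1
    · rcases eq_or_lt_of_le hn with h | h
      · rw [← h]; exact hW1
      · exact (main n (by omega)).2
end

section
/- Every nonzero submodule of the universal Whittaker module M_φ for W(2,2) contains a nonzero Whittaker vector. -/
attribute [local instance 100] LieRing.ofAssociativeRing

/-- The positive part `W_+` of `W(2,2)`, the Lie subalgebra spanned by
`{L n, W n : n ≥ 1}`. -/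
noncomputable def W22.Wplus (g : W22) : LieSubalgebra ℂ g.carrier :=
  LieSubalgebra.lieSpan ℂ g.carrier {v | ∃ n : ℤ, 1 ≤ n ∧ (v = g.L n ∨ v = g.W n)}

lemma W22.L_mem_Wplus (g : W22) {n : ℤ} (h : 1 ≤ n) : g.L n ∈ g.Wplus :=
  LieSubalgebra.subset_lieSpan ⟨n, h, Or.inl rfl⟩

lemma W22.W_mem_Wplus (g : W22) {n : ℤ} (h : 1 ≤ n) : g.W n ∈ g.Wplus :=
  LieSubalgebra.subset_lieSpan ⟨n, h, Or.inr rfl⟩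

/-- A Lie algebra homomorphism `φ : W_+ → ℂ` is *nonsingular* if
`φ(L 1) φ(L 2) φ(W 1) φ(W 2) ≠ 0`. -/
noncomputable def W22.Nonsingular (g : W22) (φ : g.Wplus →ₗ⁅ℂ⁆ ℂ) : Prop :=
  φ ⟨g.L 1, g.L_mem_Wplus le_rfl⟩ * φ ⟨g.L 2, g.L_mem_Wplus one_le_two⟩ *
    φ ⟨g.W 1, g.W_mem_Wplus le_rfl⟩ * φ ⟨g.W 2, g.W_mem_Wplus one_le_two⟩ ≠ 0

/-- A vector `v` in a `W(2,2)`-module is a *Whittaker vector* of type `φ` if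
`x • v = φ(x) v` for all `x ∈ W_+`. -/
def W22.IsWhittakerVector (g : W22) (φ : g.Wplus →ₗ⁅ℂ⁆ ℂ) {M : Type}
    [AddCommGroup M] [Module ℂ M] [LieRingModule g.carrier M] [LieModule ℂ g.carrier M]
    (v : M) : Prop :=
  ∀ x : g.Wplus, ⁅(x : g.carrier), v⁆ = φ x • v

/-- The successive action of a list of Lie algebra elements on a module vector:
`act [x₁, …, x_r] v = x₁ ⋯ x_r • v`. -/
def W22.act (g : W22) {M : Type} [AddCommGroup M] [Module ℂ M]
    [LieRingModule g.carrier M] [LieModule ℂ g.carrier M]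
    (l : List g.carrier) (v : M) : M :=
  l.foldr (fun x u => ⁅x, u⁆) v

/-- The action of a polynomial `p(z)` in the central element `z` on a module vector. -/
noncomputable def W22.polyAct (g : W22) {M : Type} [AddCommGroup M] [Module ℂ M]
    [LieRingModule g.carrier M] [LieModule ℂ g.carrier M]
    (p : Polynomial ℂ) (v : M) : M :=
  p.sum fun n a => a • ((fun u => ⁅g.z, u⁆)^[n] v)

/-- `M` with cyclic Whittaker vector `w` is *the* universal Whittaker module `M_φ` of
type `φ`: `w` is a cyclic Whittaker vector and for every module `V` with a Whittaker
vector `v` of type `φ` there is a unique `W(2,2)`-module homomorphism `M → V`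
sending `w` to `v`. -/
structure W22.IsUniversalWhittaker (g : W22) (φ : g.Wplus →ₗ⁅ℂ⁆ ℂ) (M : Type)
    [AddCommGroup M] [Module ℂ M] [LieRingModule g.carrier M] [LieModule ℂ g.carrier M]
    (w : M) : Prop where
  whittaker : g.IsWhittakerVector φ w
  cyclic : LieSubmodule.lieSpan ℂ g.carrier {w} = ⊤
  universal : ∀ (V : Type) [AddCommGroup V] [Module ℂ V] [LieRingModule g.carrier V]
      [LieModule ℂ g.carrier V] (v : V), g.IsWhittakerVector φ v →
      ∃! f : M →ₗ⁅ℂ,g.carrier⁆ V, f w = v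

namespace W22Aux

open LieModule

/-- Index type for generators: `inl (b, n)` is `L n` (if `b`) or `W n`; `inr ()` is `z`. -/
abbrev Idx := (Bool × ℤ) ⊕ Unit

variable (g : W22)

/-- The generator `L n` or `W n`. -/
noncomputable def gelt' (p : Bool × ℤ) : g.carrier := if p.1 then g.L p.2 else g.W p.2

/-- The generator corresponding to an index. -/
noncomputable def gelt : Idx → g.carrier := Sum.elim (gelt' g) (fun _ => g.z)

/-- weight of a generator: `1 - n` for `L n`/`W n`, `0` for `z`. -/
def gwt : Idx → ℤ := Sum.elim (fun p => 1 - p.2) (fun _ => 0)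

/-- An index is "negative" if it is `z` or `L n`/`W n` with `n ≤ 0`. -/
def NegI : Idx → Prop := Sum.elim (fun p => p.2 ≤ 0) (fun _ => True)

/-- A list of indices is negative if all entries are. -/
def NegL (l : List Idx) : Prop := ∀ i ∈ l, NegI i

/-- Total weight of a list of indices. -/
def lwt (l : List Idx) : ℤ := (l.map gwt).sum

lemma gwt_nonneg {i : Idx} (h : NegI i) : 0 ≤ gwt i := by
  cases i with
  | inl p => simp only [NegI, Sum.elim_inl] at h; simp only [gwt, Sum.elim_inl]; omega
  | inr u => simp [gwt]

lemma lwt_nil : lwt [] = 0 := rfl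

lemma lwt_cons (i : Idx) (l : List Idx) : lwt (i :: l) = gwt i + lwt l := by
  simp [lwt]

lemma lwt_append (l₁ l₂ : List Idx) : lwt (l₁ ++ l₂) = lwt l₁ + lwt l₂ := by
  simp [lwt]

lemma lwt_nonneg {l : List Idx} (h : NegL l) : 0 ≤ lwt l := by
  induction l with
  | nil => simp [lwt]
  | cons i l ih =>
    have h1 := gwt_nonneg (h i (List.mem_cons_self))
    have h2 := ih (fun j hj => h j (List.mem_cons_of_mem _ hj))
    rw [lwt_cons]; omega

lemma NegL_nil : NegL ([] : List Idx) := fun i hi => absurd hi (List.not_mem_nil (a := i))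

lemma NegL_cons {i : Idx} {l : List Idx} (hi : NegI i) (hl : NegL l) : NegL (i :: l) := by
  intro j hj
  rcases List.mem_cons.mp hj with h | h
  · exact h ▸ hi
  · exact hl j h

lemma NegL_of_cons {i : Idx} {l : List Idx} (h : NegL (i :: l)) : NegL l :=
  fun j hj => h j (List.mem_cons_of_mem _ hj)

lemma NegL_append {l₁ l₂ : List Idx} (h₁ : NegL l₁) (h₂ : NegL l₂) : NegL (l₁ ++ l₂) := by
  intro j hj
  rcases List.mem_append.mp hj with h | h
  · exact h₁ j h
  · exact h₂ j h

lemma gelt'_mem {p : Bool × ℤ} (h : 1 ≤ p.2) : gelt' g p ∈ g.Wplus := by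
  rcases p with ⟨b, n⟩
  cases b
  · simpa [gelt'] using g.W_mem_Wplus h
  · simpa [gelt'] using g.L_mem_Wplus h

/-- Master bracket formula: the bracket of two `L`/`W` generators is a combination of a
generator (with added indices) and `z`, with some coefficients. -/
lemma bracket_pos (b b' : Bool) (n k : ℤ) :
    ∃ α β : ℂ, ⁅gelt' g (b, n), gelt' g (b', k)⁆
      = α • gelt' g (b && b', n + k) + β • g.z := by
  cases b
  · cases b'
    · exact ⟨0, 0, by simp [gelt', g.bracket_WW]⟩
    · -- ⁅W n, L k⁆ = -⁅L k, W n⁆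
      refine ⟨(k : ℂ) - n, -(if k + n = 0 then ((k : ℂ) ^ 3 - k) / 12 else 0), ?_⟩
      have h := g.bracket_LW k n
      have hs : ⁅g.W n, g.L k⁆ = -⁅g.L k, g.W n⁆ := (lie_skew _ _).symm
      simp only [gelt', Bool.false_and, Bool.and_false, Bool.false_eq_true, if_false,
        if_true, ite_false, ite_true]
      rw [hs, h, add_comm k n]
      module
  · cases b'
    · exact ⟨(k : ℂ) - n, if n + k = 0 then ((n : ℂ) ^ 3 - n) / 12 else 0, by
        simpa [gelt'] using g.bracket_LW n k⟩
    · exact ⟨(k : ℂ) - n, if n + k = 0 then ((n : ℂ) ^ 3 - n) / 12 else 0, by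
        simpa [gelt'] using g.bracket_LL n k⟩

lemma bracket_z_right (b : Bool) (n : ℤ) : ⁅gelt' g (b, n), g.z⁆ = 0 := by
  cases b
  · have := g.bracket_zW n
    simpa [gelt'] using (lie_skew (g.W n) g.z).symm.trans (by rw [this, neg_zero])
  · have := g.bracket_zL n
    simpa [gelt'] using (lie_skew (g.L n) g.z).symm.trans (by rw [this, neg_zero])

variable {M : Type} [AddCommGroup M] [Module ℂ M] [LieRingModule g.carrier M]
  [LieModule ℂ g.carrier M]

/-- Composite action of a list of generators, as a linear endomorphism. -/
noncomputable def actE (l : List Idx) : Module.End ℂ M :=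
  (l.map fun i => toEnd ℂ g.carrier M (gelt g i)).prod

lemma actE_nil (v : M) : actE g [] v = v := rfl

lemma actE_cons (i : Idx) (l : List Idx) (v : M) :
    actE g (i :: l) v = ⁅gelt g i, actE g l v⁆ := by
  simp [actE, Module.End.mul_apply]

lemma actE_append (l₁ l₂ : List Idx) (v : M) :
    actE g (l₁ ++ l₂) v = actE g l₁ (actE g l₂ v) := by
  simp [actE, Module.End.mul_apply]

variable (w : M)

/-- The weight filtration on `M`, spanned by negative monomials of weight at most `d`
applied to `w`. -/
noncomputable def Fd (d : ℤ) : Submodule ℂ M :=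
  Submodule.span ℂ {v | ∃ l : List Idx, NegL l ∧ lwt l ≤ d ∧ v = actE g l w}

lemma mem_Fd {l : List Idx} {d : ℤ} (h : NegL l) (hle : lwt l ≤ d) :
    actE g l w ∈ Fd g w d :=
  Submodule.subset_span ⟨l, h, hle, rfl⟩

lemma Fd_mono {d e : ℤ} (h : d ≤ e) : Fd g w d ≤ Fd g w e :=
  Submodule.span_mono (fun _ ⟨l, h1, h2, h3⟩ => ⟨l, h1, h2.trans h, h3⟩)

lemma Fd_neg {d : ℤ} (hd : d < 0) {v : M} (hv : v ∈ Fd g w d) : v = 0 := by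
  have : Fd g w d ≤ ⊥ := by
    rw [Fd, Submodule.span_le]
    rintro x ⟨l, h1, h2, rfl⟩
    exact absurd (le_trans (lwt_nonneg h1) h2) (by omega)
  exact (Submodule.mem_bot ℂ).mp (this hv)

lemma lemD {i : Idx} (hi : NegI i) {d : ℤ} {v : M} (hv : v ∈ Fd g w d) :
    ⁅gelt g i, v⁆ ∈ Fd g w (d + gwt i) := by
  have hle : Fd g w d ≤ Submodule.comap (toEnd ℂ g.carrier M (gelt g i)) (Fd g w (d + gwt i)) := by
    rw [Fd, Submodule.span_le]
    rintro x ⟨l, h1, h2, rfl⟩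
    simp only [SetLike.mem_coe, Submodule.mem_comap, toEnd_apply_apply]
    rw [← actE_cons]
    exact mem_Fd g w (NegL_cons hi h1) (by rw [lwt_cons]; omega)
  have := hle hv
  rwa [Submodule.mem_comap, toEnd_apply_apply] at this

variable (φ : g.Wplus →ₗ⁅ℂ⁆ ℂ)

/-- The value of `φ` on a positive generator (`0` for non-positive indices). -/
noncomputable def phiP (p : Bool × ℤ) : ℂ :=
  if h : 1 ≤ p.2 then φ ⟨gelt' g p, gelt'_mem g h⟩ else 0

/-- The twisted action `x - φ(x)` of a generator. -/
noncomputable def Top (p : Bool × ℤ) : Module.End ℂ M :=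
  toEnd ℂ g.carrier M (gelt' g p) - phiP g φ p • 1

lemma Top_apply (p : Bool × ℤ) (v : M) :
    Top g φ p v = ⁅gelt' g p, v⁆ - phiP g φ p • v := by
  simp [Top, LinearMap.sub_apply, LinearMap.smul_apply, toEnd_apply_apply]

lemma Top_w (hw : g.IsWhittakerVector φ w) {p : Bool × ℤ} (hp : 1 ≤ p.2) :
    Top g φ p w = 0 := by
  rw [Top_apply, phiP, dif_pos hp, hw ⟨gelt' g p, gelt'_mem g hp⟩, sub_self]

/-- Key straightening lemma: a positive generator inside a negative monomial stays within
the filtration level given by the weight of the negative entries. -/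
lemma claimC (hw : g.IsWhittakerVector φ w) :
    ∀ B : List Idx, NegL B → ∀ A : List Idx, NegL A → ∀ q : Bool × ℤ, 1 ≤ q.2 →
      actE g A ⁅gelt' g q, actE g B w⁆ ∈ Fd g w (lwt A + lwt B) := by
  intro B
  induction B with
  | nil =>
    intro _ A hA q hq
    have h1 : ⁅gelt' g q, actE g ([] : List Idx) w⁆ = phiP g φ q • w := by
      rw [actE_nil, phiP, dif_pos hq, hw ⟨gelt' g q, gelt'_mem g hq⟩]
    rw [h1, map_smul]
    exact Submodule.smul_mem _ _ (mem_Fd g w hA (by rw [lwt_nil]; omega))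
  | cons y B' IH =>
    intro hB A hA q hq
    have hy : NegI y := hB y (List.mem_cons_self)
    have hB' : NegL B' := NegL_of_cons hB
    rw [lwt_cons, actE_cons, leibniz_lie, map_add]
    refine Submodule.add_mem _ ?_ ?_
    · -- the ⁅⁅q, y⁆, ·⁆ term
      cases y with
      | inr u =>
        have : gelt g (Sum.inr u) = g.z := rfl
        rw [this, bracket_z_right, zero_lie, map_zero]
        exact Submodule.zero_mem _
      | inl p =>
        have hk : p.2 ≤ 0 := hy
        obtain ⟨α, β, hab⟩ := bracket_pos g q.1 p.1 q.2 p.2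
        have hq' : (q.1, q.2) = q := rfl
        have hp' : (p.1, p.2) = p := rfl
        rw [hq', hp'] at hab
        have hz : gelt g (Sum.inl p) = gelt' g p := rfl
        rw [hz, hab, add_lie, smul_lie, smul_lie, map_add, map_smul, map_smul]
        refine Submodule.add_mem _ (Submodule.smul_mem _ _ ?_) (Submodule.smul_mem _ _ ?_)
        · by_cases hnk : q.2 + p.2 ≤ 0
          · have he : ⁅gelt' g (q.1 && p.1, q.2 + p.2), actE g B' w⁆
                = actE g (Sum.inl (q.1 && p.1, q.2 + p.2) :: B') w := by rw [actE_cons]; rfl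
            rw [he, ← actE_append]
            refine mem_Fd g w (NegL_append hA (NegL_cons hnk hB')) ?_
            rw [lwt_append, lwt_cons]
            simp only [gwt, Sum.elim_inl]
            omega
          · have := IH hB' A hA (q.1 && p.1, q.2 + p.2) (by omega)
            refine Fd_mono g w ?_ this
            simp only [gwt, Sum.elim_inl]
            omega
        · have he : ⁅g.z, actE g B' w⁆ = actE g (Sum.inr () :: B') w := by rw [actE_cons]; rfl
          rw [he, ← actE_append]
          refine mem_Fd g w (NegL_append hA (NegL_cons trivial hB')) ?_
          rw [lwt_append, lwt_cons]
          simp only [gwt, Sum.elim_inl, Sum.elim_inr]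
          omega
    · -- the ⁅y, ⁅q, ·⁆⁆ term
      have he : actE g A ⁅gelt g y, ⁅gelt' g q, actE g B' w⁆⁆
          = actE g (A ++ [y]) ⁅gelt' g q, actE g B' w⁆ := by
        rw [actE_append, actE_cons, actE_nil]
      rw [he]
      have := IH hB' (A ++ [y]) (NegL_append hA (NegL_cons hy (NegL_nil))) q hq
      refine Fd_mono g w ?_ this
      rw [lwt_append, lwt_cons, lwt_nil]
      omega

/-- The twisted positive operators strictly lower the filtration (on monomials). -/
lemma TopFd (hw : g.IsWhittakerVector φ w) :
    ∀ l : List Idx, NegL l → ∀ q : Bool × ℤ, 1 ≤ q.2 → ∀ d : ℤ, lwt l ≤ d →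
      Top g φ q (actE g l w) ∈ Fd g w (d - 1) := by
  intro l
  induction l with
  | nil =>
    intro _ q hq d _
    have : actE g ([] : List Idx) w = w := actE_nil g w
    rw [this, Top_w g w φ hw hq]
    exact Submodule.zero_mem _
  | cons y l' IH =>
    intro hl q hq d hd
    have hy : NegI y := hl y (List.mem_cons_self)
    have hl' : NegL l' := NegL_of_cons hl
    rw [lwt_cons] at hd
    have key : Top g φ q (actE g (y :: l') w)
        = ⁅gelt g y, Top g φ q (actE g l' w)⁆ + ⁅⁅gelt' g q, gelt g y⁆, actE g l' w⁆ := by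
      rw [actE_cons, Top_apply, Top_apply, lie_sub, lie_smul, leibniz_lie]
      abel
    rw [key]
    refine Submodule.add_mem _ ?_ ?_
    · have h1 := IH hl' q hq (d - gwt y) (by omega)
      have h2 := lemD g w hy h1
      exact Fd_mono g w (by omega) h2
    · cases y with
      | inr u =>
        have : gelt g (Sum.inr u) = g.z := rfl
        rw [this, bracket_z_right, zero_lie]
        exact Submodule.zero_mem _
      | inl p =>
        have hk : p.2 ≤ 0 := hy
        have hwy : gwt (Sum.inl p) = 1 - p.2 := rfl
        rw [hwy] at hd
        obtain ⟨α, β, hab⟩ := bracket_pos g q.1 p.1 q.2 p.2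
        have hq' : (q.1, q.2) = q := rfl
        have hp' : (p.1, p.2) = p := rfl
        rw [hq', hp'] at hab
        have hz : gelt g (Sum.inl p) = gelt' g p := rfl
        rw [hz, hab, add_lie, smul_lie, smul_lie]
        refine Submodule.add_mem _ (Submodule.smul_mem _ _ ?_) (Submodule.smul_mem _ _ ?_)
        · by_cases hnk : q.2 + p.2 ≤ 0
          · rw [show ⁅gelt' g (q.1 && p.1, q.2 + p.2), actE g l' w⁆
                = actE g (Sum.inl (q.1 && p.1, q.2 + p.2) :: l') w from by rw [actE_cons]; rfl]
            refine mem_Fd g w (NegL_cons hnk hl') ?_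
            rw [lwt_cons]
            simp only [gwt, Sum.elim_inl]
            omega
          · have := claimC g w φ hw l' hl' [] NegL_nil (q.1 && p.1, q.2 + p.2) (by omega)
            rw [show actE g ([] : List Idx) ⁅gelt' g (q.1 && p.1, q.2 + p.2), actE g l' w⁆
                = ⁅gelt' g (q.1 && p.1, q.2 + p.2), actE g l' w⁆ from actE_nil g _] at this
            rw [lwt_nil] at this
            exact Fd_mono g w (by omega) this
        · rw [show ⁅g.z, actE g l' w⁆ = actE g (Sum.inr () :: l') w from by rw [actE_cons]; rfl]
          refine mem_Fd g w (NegL_cons trivial hl') ?_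
          rw [lwt_cons]
          simp only [gwt, Sum.elim_inr]
          omega

/-- Span version of `TopFd`. -/
lemma Top_Fd (hw : g.IsWhittakerVector φ w) {q : Bool × ℤ} (hq : 1 ≤ q.2) {d : ℤ} {v : M}
    (hv : v ∈ Fd g w d) : Top g φ q v ∈ Fd g w (d - 1) := by
  have hle : Fd g w d ≤ Submodule.comap (Top g φ q) (Fd g w (d - 1)) := by
    rw [Fd, Submodule.span_le]
    rintro x ⟨l, h1, h2, rfl⟩
    simp only [SetLike.mem_coe, Submodule.mem_comap]
    exact TopFd g w φ hw l h1 q hq d h2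
  exact hle hv

/-- The composite twisted action of a word of positive generators. -/
noncomputable def applyW (word : List (Bool × ℤ)) : Module.End ℂ M :=
  (word.map (Top g φ)).prod

lemma applyW_nil (v : M) : applyW g φ [] v = v := rfl

lemma applyW_cons (q : Bool × ℤ) (word : List (Bool × ℤ)) (v : M) :
    applyW g φ (q :: word) v = Top g φ q (applyW g φ word v) := by
  simp [applyW, Module.End.mul_apply]

lemma applyW_Fd (hw : g.IsWhittakerVector φ w) :
    ∀ word : List (Bool × ℤ), (∀ q ∈ word, 1 ≤ q.2) → ∀ d : ℤ, ∀ v ∈ Fd g w d,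
      applyW g φ word v ∈ Fd g w (d - word.length) := by
  intro word
  induction word with
  | nil =>
    intro _ d v hv
    rw [applyW_nil]
    exact Fd_mono g w (by simp) hv
  | cons q word' IH =>
    intro hword d v hv
    have h1 := IH (fun p hp => hword p (List.mem_cons_of_mem _ hp)) d v hv
    have h2 := Top_Fd g w φ hw (hword q (List.mem_cons_self)) h1
    rw [applyW_cons]
    refine Fd_mono g w ?_ h2
    simp only [List.length_cons]
    push_cast
    omega

/-- Every element of `M` lies in some filtration level, provided `w` is a cyclic
Whittaker vector. -/
lemma claimA (hw : g.IsWhittakerVector φ w)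
    (hc : LieSubmodule.lieSpan ℂ g.carrier {w} = ⊤) (v : M) : ∃ d : ℤ, v ∈ Fd g w d := by
  have hdir : Directed (· ≤ ·) (Fd g w (M := M)) :=
    Monotone.directed_le (fun d e h => Fd_mono g w h)
  have hmem : ∀ x : M, x ∈ (⨆ d, Fd g w d) ↔ ∃ d, x ∈ Fd g w d := fun x =>
    Submodule.mem_iSup_of_directed _ hdir
  have hlie : ∀ {x : g.carrier} {m : M}, m ∈ (⨆ d, Fd g w d) → ⁅x, m⁆ ∈ (⨆ d, Fd g w d) := by
    intro x m hm
    obtain ⟨d, hd⟩ := (hmem m).mp hm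
    let Kv : Submodule ℂ g.carrier :=
      { carrier := {x | ⁅x, m⁆ ∈ (⨆ d, Fd g w d)}
        add_mem' := by
          intro a b ha hb
          simp only [Set.mem_setOf_eq, add_lie]
          exact Submodule.add_mem _ ha hb
        zero_mem' := by
          simp only [Set.mem_setOf_eq, zero_lie]
          exact Submodule.zero_mem _
        smul_mem' := by
          intro c a ha
          simp only [Set.mem_setOf_eq, smul_lie]
          exact Submodule.smul_mem _ _ ha }
    have hbasis : ∀ i, g.basis i ∈ Kv := by
      intro i
      have hb : g.basis i = gelt g i := by
        rw [g.basis_eq]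
        cases i with
        | inl p => rfl
        | inr u => rfl
      show ⁅g.basis i, m⁆ ∈ (⨆ d, Fd g w d)
      rw [hb]
      cases i with
      | inr u =>
        exact (hmem _).mpr ⟨d + gwt (Sum.inr u), lemD g w (show NegI (Sum.inr u) from trivial) hd⟩
      | inl p =>
        by_cases hp : p.2 ≤ 0
        · exact (hmem _).mpr ⟨d + gwt (Sum.inl p), lemD g w (show NegI (Sum.inl p) from hp) hd⟩
        · have hp1 : 1 ≤ p.2 := by omega
          have hsplit : ⁅gelt g (Sum.inl p), m⁆ = Top g φ p m + phiP g φ p • m := by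
            rw [Top_apply, sub_add_cancel]
            rfl
          rw [hsplit]
          refine (hmem _).mpr ⟨d, Submodule.add_mem _ ?_ (Submodule.smul_mem _ _ hd)⟩
          exact Fd_mono g w (by omega) (Top_Fd g w φ hw hp1 hd)
    have hKv : Kv = ⊤ := by
      apply top_unique
      rw [← g.basis.span_eq]
      exact Submodule.span_le.mpr (by rintro x ⟨i, rfl⟩; exact hbasis i)
    have : x ∈ Kv := hKv ▸ Submodule.mem_top
    exact this
  let SL : LieSubmodule ℂ g.carrier M :=
    { toSubmodule := ⨆ d, Fd g w d
      lie_mem := hlie }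
  have hwSL : w ∈ SL := by
    show w ∈ (⨆ d, Fd g w d)
    refine (hmem w).mpr ⟨0, ?_⟩
    have : actE g ([] : List Idx) w = w := actE_nil g w
    rw [← this]
    exact mem_Fd g w NegL_nil (by rw [lwt_nil])
  have hle : LieSubmodule.lieSpan ℂ g.carrier {w} ≤ SL :=
    LieSubmodule.lieSpan_le.mpr (Set.singleton_subset_iff.mpr hwSL)
  rw [hc] at hle
  exact (hmem v).mp (hle trivial)

end W22Aux

/-- Every nonzero submodule of the universal Whittaker module `M_φ` contains a nonzero
Whittaker vector. -/
theorem w22_submodule_has_whittaker_vector (g : W22) (φ : g.Wplus →ₗ⁅ℂ⁆ ℂ)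
    (hφ : g.Nonsingular φ) (M : Type) [AddCommGroup M] [Module ℂ M]
    [LieRingModule g.carrier M] [LieModule ℂ g.carrier M] (w : M)
    (hM : g.IsUniversalWhittaker φ M w) :
    ∀ N : LieSubmodule ℂ g.carrier M, N ≠ ⊥ →
      ∃ v : M, v ∈ N ∧ v ≠ 0 ∧ g.IsWhittakerVector φ v := by
  classical
  intro N hN
  have hw := hM.whittaker
  -- pick a nonzero element of `N`
  obtain ⟨u, huN, hu0⟩ : ∃ u, u ∈ N ∧ u ≠ 0 := by
    by_contra h
    push_neg at h
    exact hN (LieSubmodule.eq_bot_iff N |>.mpr fun m hm => h m hm)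
  -- it lies in some filtration level
  obtain ⟨d, hd⟩ := W22Aux.claimA g w φ hw hM.cyclic u
  have hD : u ∈ W22Aux.Fd g w (max d 0) := W22Aux.Fd_mono g w (le_max_left _ _) hd
  -- the set of lengths of positive words not killing `u`
  set S : Set ℕ := {L | ∃ word : List (Bool × ℤ), (∀ q ∈ word, 1 ≤ q.2) ∧
    word.length = L ∧ W22Aux.applyW g φ word u ≠ 0} with hS
  have h0S : 0 ∈ S :=
    ⟨[], fun q hq => absurd hq (List.not_mem_nil (a := q)), rfl, by
      rw [W22Aux.applyW_nil]; exact hu0⟩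
  have hbdd : ∀ L ∈ S, (L : ℤ) ≤ max d 0 := by
    intro L hL
    obtain ⟨word, hpos, hlen, hne⟩ := hL
    by_contra hgt
    push_neg at hgt
    have hmem := W22Aux.applyW_Fd g w φ hw word hpos (max d 0) u hD
    rw [hlen] at hmem
    exact hne (W22Aux.Fd_neg g w (by omega) hmem)
  have hbdd' : BddAbove S := ⟨(max d 0).toNat, fun L hL => by
    have := hbdd L hL; omega⟩
  have hmax := Nat.sSup_mem ⟨0, h0S⟩ hbdd'
  obtain ⟨word, hpos, hlen, hne⟩ := hmax
  set v' : M := W22Aux.applyW g φ word u with hv'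
  -- `v'` lies in `N`
  have hv'N : v' ∈ N := by
    rw [hv']
    clear hlen hne hv'
    induction word with
    | nil => rw [W22Aux.applyW_nil]; exact huN
    | cons q word' ih =>
      have h1 := ih (fun p hp => hpos p (List.mem_cons_of_mem _ hp))
      rw [W22Aux.applyW_cons, W22Aux.Top_apply]
      exact sub_mem (N.lie_mem h1) (SMulMemClass.smul_mem _ h1)
  -- all twisted positive operators kill `v'` by maximality
  have hTop0 : ∀ q : Bool × ℤ, 1 ≤ q.2 → W22Aux.Top g φ q v' = 0 := by
    intro q hq
    by_contra hne2
    have hmem2 : sSup S + 1 ∈ S := by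
      refine ⟨q :: word, ?_, ?_, ?_⟩
      · intro p hp
        rcases List.mem_cons.mp hp with h | h
        · exact h ▸ hq
        · exact hpos p h
      · rw [List.length_cons, hlen]
      · rw [W22Aux.applyW_cons, ← hv']; exact hne2
    have := le_csSup hbdd' hmem2
    omega
  have hgen : ∀ q : Bool × ℤ, 1 ≤ q.2 →
      ⁅W22Aux.gelt' g q, v'⁆ = W22Aux.phiP g φ q • v' := by
    intro q hq
    have h1 := hTop0 q hq
    rw [W22Aux.Top_apply] at h1
    exact sub_eq_zero.mp h1
  -- extend the Whittaker property from generators to all of `W_+`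
  have hwhit : g.IsWhittakerVector φ v' := by
    intro x
    let K : LieSubalgebra ℂ g.carrier :=
      { carrier := {y | ∃ hy : y ∈ g.Wplus, ⁅y, v'⁆ = φ ⟨y, hy⟩ • v'}
        add_mem' := by
          rintro a b ⟨ha, hae⟩ ⟨hb, hbe⟩
          refine ⟨add_mem ha hb, ?_⟩
          have hsum : (⟨a + b, add_mem ha hb⟩ : g.Wplus) = ⟨a, ha⟩ + ⟨b, hb⟩ := rfl
          rw [add_lie, hae, hbe, hsum, map_add φ, add_smul]
        zero_mem' := by
          refine ⟨zero_mem _, ?_⟩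
          have h0 : (⟨(0 : g.carrier), zero_mem _⟩ : g.Wplus) = 0 := rfl
          rw [zero_lie, h0, map_zero φ, zero_smul]
        smul_mem' := by
          rintro c a ⟨ha, hae⟩
          refine ⟨g.Wplus.smul_mem c ha, ?_⟩
          have hsm : (⟨c • a, g.Wplus.smul_mem c ha⟩ : g.Wplus) = c • ⟨a, ha⟩ := rfl
          rw [smul_lie, hae, hsm, map_smul φ, smul_assoc]
        lie_mem' := by
          rintro a b ⟨ha, hae⟩ ⟨hb, hbe⟩
          refine ⟨g.Wplus.lie_mem ha hb, ?_⟩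
          have hL : ⁅⁅a, b⁆, v'⁆ = 0 := by
            rw [lie_lie, hae, hbe, lie_smul, lie_smul, hae, hbe, smul_smul, smul_smul,
              mul_comm, sub_self]
          have hbr : (⟨⁅a, b⁆, g.Wplus.lie_mem ha hb⟩ : g.Wplus)
              = ⁅(⟨a, ha⟩ : g.Wplus), (⟨b, hb⟩ : g.Wplus)⁆ := rfl
          have hR : φ ⟨⁅a, b⁆, g.Wplus.lie_mem ha hb⟩ = 0 := by
            rw [hbr, LieHom.map_lie, Ring.lie_def, mul_comm, sub_self]
          rw [hL, hR, zero_smul] }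
    have hKgen : {v | ∃ n : ℤ, 1 ≤ n ∧ (v = g.L n ∨ v = g.W n)} ⊆ K := by
      rintro y ⟨n, hn, hy | hy⟩ <;> subst hy
      · refine ⟨g.L_mem_Wplus hn, ?_⟩
        have h1 := hgen (true, n) hn
        have h2 : W22Aux.gelt' g (true, n) = g.L n := rfl
        rw [h2] at h1
        rw [h1, W22Aux.phiP, dif_pos hn]
        exact congrArg (fun t => φ t • v') (Subtype.ext h2)
      · refine ⟨g.W_mem_Wplus hn, ?_⟩
        have h1 := hgen (false, n) hn
        have h2 : W22Aux.gelt' g (false, n) = g.W n := rfl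
        rw [h2] at h1
        rw [h1, W22Aux.phiP, dif_pos hn]
        exact congrArg (fun t => φ t • v') (Subtype.ext h2)
    have hxK : (x : g.carrier) ∈ K := LieSubalgebra.lieSpan_le.mpr hKgen x.2
    obtain ⟨hx', heq⟩ := hxK
    rwa [show (⟨(x : g.carrier), hx'⟩ : g.Wplus) = x from Subtype.ext rfl] at heq
  exact ⟨v', hv'N, hne, hwhit⟩
end

section
/- Every nontrivial submodule of a Whittaker module of type φ for W(2,2) contains a nontrivial Whittaker submodule of type φ. -/
attribute [instance 100] LieRing.ofAssociativeRing

-- ==================== auxiliary development ====================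
namespace W22Aux

open Submodule

variable (g : W22)

/-- Alphabet entries: `none` is `z`, `some (b, n)` is `L n` (if `b`) or `W n`. -/
abbrev Ent := Option (Bool × ℤ)

noncomputable def elt (e : Ent) : g.carrier :=
  e.elim g.z (fun p => if p.1 then g.L p.2 else g.W p.2)

@[simp] lemma elt_none : elt g none = g.z := rfl
@[simp] lemma elt_some_true (n : ℤ) : elt g (some (true, n)) = g.L n := by simp [elt]
@[simp] lemma elt_some_false (n : ℤ) : elt g (some (false, n)) = g.W n := by simp [elt]

def nu (e : Ent) : ℕ := e.elim 0 fun p => 3 ^ (-p.2).toNat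

@[simp] lemma nu_none : nu none = 0 := rfl
@[simp] lemma nu_some (p : Bool × ℤ) : nu (some p) = 3 ^ (-p.2).toNat := rfl

lemma nu_some_pos (p : Bool × ℤ) : 0 < nu (some p) := pow_pos (by norm_num) _

def GoodE (e : Ent) : Prop := ∀ p : Bool × ℤ, e = some p → p.2 ≤ 0

def Good (l : List Ent) : Prop := ∀ e ∈ l, GoodE e

def mu (l : List Ent) : ℕ := (l.map nu).sum

@[simp] lemma mu_nil : mu [] = 0 := rfl
lemma mu_cons (e : Ent) (l : List Ent) : mu (e :: l) = nu e + mu l := by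
  simp [mu]

lemma lie_gen_z (b : Bool) (n : ℤ) : ⁅elt g (some (b, n)), g.z⁆ = 0 := by
  cases b
  · rw [elt_some_false, ← lie_skew, g.bracket_zW, neg_zero]
  · rw [elt_some_true, ← lie_skew, g.bracket_zL, neg_zero]

lemma brkt (b b' : Bool) (n m : ℤ) :
    ∃ α β : ℂ, ⁅elt g (some (b, n)), elt g (some (b', m))⁆ =
      α • elt g (some (b && b', n + m)) + β • g.z := by
  cases b <;> cases b'
  · exact ⟨0, 0, by simp [g.bracket_WW]⟩
  · -- ⁅W n, L m⁆
    have h := g.bracket_LW m n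
    rw [show m + n = n + m from add_comm m n] at h
    refine ⟨-((n : ℂ) - m), -(if n + m = 0 then (((m : ℂ) ^ 3 - m) / 12) else 0), ?_⟩
    simp only [elt_some_false, Bool.and_true, elt_some_true, Bool.false_and]
    rw [← lie_skew, h, neg_add, neg_smul, neg_smul]
  · -- ⁅L n, W m⁆
    exact ⟨(m : ℂ) - n, if n + m = 0 then (((n : ℂ) ^ 3 - n) / 12) else 0,
      by simpa using g.bracket_LW n m⟩
  · exact ⟨(m : ℂ) - n, if n + m = 0 then (((n : ℂ) ^ 3 - n) / 12) else 0,
      by simpa using g.bracket_LL n m⟩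

noncomputable def pgen (b : Bool) (n : ℤ) (hn : 1 ≤ n) : g.Wplus :=
  ⟨elt g (some (b, n)), by
    cases b
    · simpa using g.W_mem_Wplus hn
    · simpa using g.L_mem_Wplus hn⟩

@[simp] lemma pgen_coe (b : Bool) (n : ℤ) (hn : 1 ≤ n) :
    ((pgen g b n hn : g.Wplus) : g.carrier) = elt g (some (b, n)) := rfl

/- The `Wplus` subalgebra is the linear span of the generators `L n, W n` (`n ≥ 1`). -/
lemma mem_wplus_iff (x : g.carrier) :
    x ∈ g.Wplus ↔ x ∈ span ℂ {v : g.carrier | ∃ n : ℤ, 1 ≤ n ∧ (v = g.L n ∨ v = g.W n)} := by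
  set S : Set g.carrier := {v | ∃ n : ℤ, 1 ≤ n ∧ (v = g.L n ∨ v = g.W n)} with hS
  constructor
  · intro hx
    have hclosed : ∀ x ∈ span ℂ S, ∀ y ∈ span ℂ S, ⁅x, y⁆ ∈ span ℂ S := by
      intro x hx
      induction hx using span_induction with
      | mem a ha =>
        intro y hy
        induction hy using span_induction with
        | mem c hc =>
          obtain ⟨n, hn, rfl | rfl⟩ := ha <;> obtain ⟨m, hm, rfl | rfl⟩ := hc
          · rw [g.bracket_LL, if_neg (by omega : ¬ n + m = 0), zero_smul, add_zero]
            exact smul_mem _ _ (subset_span ⟨n + m, by omega, Or.inl rfl⟩)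
          · rw [g.bracket_LW, if_neg (by omega : ¬ n + m = 0), zero_smul, add_zero]
            exact smul_mem _ _ (subset_span ⟨n + m, by omega, Or.inr rfl⟩)
          · rw [← lie_skew, g.bracket_LW, if_neg (by omega : ¬ m + n = 0), zero_smul, add_zero]
            exact neg_mem (smul_mem _ _ (subset_span ⟨m + n, by omega, Or.inr rfl⟩))
          · rw [g.bracket_WW]; exact zero_mem _
        | zero => rw [lie_zero]; exact zero_mem _
        | add c d _ _ ihc ihd => rw [lie_add]; exact add_mem ihc ihd
        | smul t c _ ihc => rw [lie_smul]; exact smul_mem _ _ ihc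
      | zero => intro y hy; rw [zero_lie]; exact zero_mem _
      | add a b _ _ iha ihb => intro y hy; rw [add_lie]; exact add_mem (iha y hy) (ihb y hy)
      | smul t a _ iha => intro y hy; rw [smul_lie]; exact smul_mem _ _ (iha y hy)
    let P : LieSubalgebra ℂ g.carrier :=
      { span ℂ S with lie_mem' := fun {a b} ha hb => hclosed a ha b hb }
    have : g.Wplus ≤ P := LieSubalgebra.lieSpan_le.mpr (fun v hv => subset_span hv)
    exact this hx
  · intro hx
    have : span ℂ S ≤ (g.Wplus : Submodule ℂ g.carrier) := by
      rw [span_le]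
      rintro v ⟨n, hn, rfl | rfl⟩
      · exact g.L_mem_Wplus hn
      · exact g.W_mem_Wplus hn
    exact this hx

/- Criterion: a vector is Whittaker iff the generator conditions hold. -/
lemma crit (φ : g.Wplus →ₗ⁅ℂ⁆ ℂ) {V : Type} [AddCommGroup V] [Module ℂ V]
    [LieRingModule g.carrier V] [LieModule ℂ g.carrier V] (v : V)
    (h : ∀ (b : Bool) (n : ℤ) (hn : 1 ≤ n),
      ⁅elt g (some (b, n)), v⁆ = φ (pgen g b n hn) • v) :
    g.IsWhittakerVector φ v := by
  rintro ⟨x, hx⟩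
  have hx' := (mem_wplus_iff g x).mp hx
  have key : ∀ (y : g.carrier) (hy : y ∈ span ℂ {v : g.carrier | ∃ n : ℤ, 1 ≤ n ∧
      (v = g.L n ∨ v = g.W n)}), ⁅y, v⁆ = φ ⟨y, (mem_wplus_iff g y).mpr hy⟩ • v := by
    intro y hy
    induction hy using span_induction with
    | mem a ha =>
      obtain ⟨n, hn, rfl | rfl⟩ := ha
      · have := h true n hn
        exact this
      · have := h false n hn
        exact this
    | zero =>
      rw [zero_lie, show (⟨(0 : g.carrier), _⟩ : g.Wplus) = 0 from Subtype.ext rfl, map_zero φ,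
        zero_smul]
    | add a b ha hb iha ihb =>
      rw [add_lie, iha, ihb, show (⟨a + b, _⟩ : g.Wplus) =
        ⟨a, (mem_wplus_iff g a).mpr ha⟩ + ⟨b, (mem_wplus_iff g b).mpr hb⟩ from Subtype.ext rfl,
        map_add φ, add_smul]
    | smul t a ha iha =>
      rw [smul_lie, iha, show (⟨t • a, _⟩ : g.Wplus) =
        t • ⟨a, (mem_wplus_iff g a).mpr ha⟩ from Subtype.ext rfl, map_smul φ, smul_eq_mul,
        mul_smul]
  exact key x hx'

end W22Aux

namespace W22Aux

open Submodule

variable (g : W22) {V : Type} [AddCommGroup V] [Module ℂ V]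
  [LieRingModule g.carrier V] [LieModule ℂ g.carrier V] (wv : V)

/-- Monomial action on `wv`. -/
noncomputable def mon (l : List Ent) : V := l.foldr (fun e u => ⁅elt g e, u⁆) wv

@[simp] lemma mon_nil : mon g wv [] = wv := rfl
lemma mon_cons (e : Ent) (l : List Ent) :
    mon g wv (e :: l) = ⁅elt g e, mon g wv l⁆ := rfl

/-- Span of good monomials of measure `< k`. -/
noncomputable def TT (k : ℕ) : Submodule ℂ V :=
  span ℂ {v : V | ∃ l : List Ent, Good l ∧ mu l < k ∧ mon g wv l = v}

lemma mon_mem_TT {l : List Ent} {k : ℕ} (hl : Good l) (hk : mu l < k) :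
    mon g wv l ∈ TT g wv k := subset_span ⟨l, hl, hk, rfl⟩

lemma TT_mono : Monotone (TT g wv) := fun _ _ hab =>
  span_mono (fun _ ⟨l, h1, h2, h3⟩ => ⟨l, h1, lt_of_lt_of_le h2 hab, h3⟩)

@[simp] lemma TT_zero : TT g wv 0 = ⊥ := by
  rw [TT, show {v : V | ∃ l : List Ent, Good l ∧ mu l < 0 ∧ mon g wv l = v} = ∅ by
    ext v; simp, span_empty]

lemma good_cons {e : Ent} {l : List Ent} (he : GoodE e) (hl : Good l) : Good (e :: l) := by
  intro e' he'
  rcases List.mem_cons.mp he' with rfl | h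
  · exact he
  · exact hl e' h

lemma lie_mem_TT (e : Ent) (he : GoodE e) {k : ℕ} {v : V} (hv : v ∈ TT g wv k) :
    ⁅elt g e, v⁆ ∈ TT g wv (nu e + k) := by
  have hle : TT g wv k ≤ (TT g wv (nu e + k)).comap (LieModule.toEnd ℂ g.carrier V (elt g e)) := by
    rw [TT, span_le]
    rintro v ⟨l, hl, hm, rfl⟩
    simp only [SetLike.mem_coe, mem_comap, LieModule.toEnd_apply_apply]
    rw [← mon_cons]
    exact mon_mem_TT g wv (good_cons he hl) (by rw [mu_cons]; omega)
  simpa using hle hv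

/-- The key decreasing lemma: applying `x - φ(x)` for a positive generator `x`
strictly decreases the measure. -/
lemma main_lemma (φ : g.Wplus →ₗ⁅ℂ⁆ ℂ) (hwv : g.IsWhittakerVector φ wv)
    (l : List Ent) (hl : Good l) (b : Bool) (n : ℤ) (hn : 1 ≤ n) :
    ⁅elt g (some (b, n)), mon g wv l⁆ - φ (pgen g b n hn) • mon g wv l ∈ TT g wv (mu l) := by
  induction l generalizing b n with
  | nil =>
    have h := hwv (pgen g b n hn)
    rw [mon_nil, show elt g (some (b, n)) = ((pgen g b n hn : g.Wplus) : g.carrier) from rfl,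
      h, sub_self]
    exact zero_mem _
  | cons e t ih =>
    have hGt : Good t := fun e' h => hl e' (List.mem_cons_of_mem _ h)
    have hGe : GoodE e := hl e (List.mem_cons_self)
    have hr := ih hGt b n hn
    have hkey : ⁅elt g (some (b, n)), mon g wv (e :: t)⁆
        - φ (pgen g b n hn) • mon g wv (e :: t)
        = ⁅⁅elt g (some (b, n)), elt g e⁆, mon g wv t⁆
          + ⁅elt g e, ⁅elt g (some (b, n)), mon g wv t⁆ - φ (pgen g b n hn) • mon g wv t⁆ := by
      rw [mon_cons, leibniz_lie, lie_sub, lie_smul, ← mon_cons]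
      abel
    rw [hkey]
    refine add_mem ?_ ?_
    · -- ⁅⁅x, elt e⁆, mon t⁆ ∈ TT (mu (e :: t))
      cases e with
      | none =>
        rw [elt_none, lie_gen_z, zero_lie]
        exact zero_mem _
      | some p =>
        obtain ⟨b', m⟩ := p
        have hm : m ≤ 0 := hGe (b', m) rfl
        have hnu : 0 < nu (some (b', m)) := nu_some_pos _
        obtain ⟨α, β, hβ⟩ := brkt g b b' n m
        rw [hβ, add_lie, smul_lie, smul_lie]
        refine add_mem (smul_mem _ _ ?_) (smul_mem _ _ ?_)
        · rcases le_or_gt (n + m) 0 with hnm | hnm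
          · rw [← mon_cons]
            refine mon_mem_TT g wv (good_cons (fun q hq => by cases hq; exact hnm) hGt) ?_
            rw [mu_cons, mu_cons]
            have hpow : (3 : ℕ) ^ (-(n + m)).toNat < 3 ^ (-m).toNat :=
              Nat.pow_lt_pow_right (by norm_num) (by omega)
            simp only [nu_some]
            omega
          · have h2 := ih hGt (b && b') (n + m) hnm
            have hsplit : ⁅elt g (some (b && b', n + m)), mon g wv t⁆
                = (⁅elt g (some (b && b', n + m)), mon g wv t⁆
                    - φ (pgen g (b && b') (n + m) hnm) • mon g wv t)
                  + φ (pgen g (b && b') (n + m) hnm) • mon g wv t := by abel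
            rw [hsplit]
            refine add_mem (TT_mono g wv (by rw [mu_cons]; omega) h2)
              (smul_mem _ _ (mon_mem_TT g wv hGt (by rw [mu_cons]; omega)))
        · rw [← elt_none, ← mon_cons]
          exact mon_mem_TT g wv (good_cons (fun q hq => by cases hq) hGt)
            (by rw [mu_cons, mu_cons]; simp only [nu_none]; omega)
    · rw [mu_cons]
      exact lie_mem_TT g wv e hGe hr

/-- Linearized version of the decreasing lemma. -/
lemma sub_mem_TT (φ : g.Wplus →ₗ⁅ℂ⁆ ℂ) (hwv : g.IsWhittakerVector φ wv)
    (b : Bool) (n : ℤ) (hn : 1 ≤ n) (k : ℕ) {v : V} (hv : v ∈ TT g wv (k + 1)) :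
    ⁅elt g (some (b, n)), v⁆ - φ (pgen g b n hn) • v ∈ TT g wv k := by
  set f : V →ₗ[ℂ] V :=
    LieModule.toEnd ℂ g.carrier V (elt g (some (b, n))) - φ (pgen g b n hn) • LinearMap.id
    with hf
  have hfa : ∀ u : V, f u = ⁅elt g (some (b, n)), u⁆ - φ (pgen g b n hn) • u := by
    intro u
    simp [hf, LieModule.toEnd_apply_apply]
  have hle : TT g wv (k + 1) ≤ (TT g wv k).comap f := by
    rw [TT, span_le]
    rintro v ⟨l, hl, hm, rfl⟩
    simp only [SetLike.mem_coe, mem_comap, hfa]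
    exact TT_mono g wv (by omega) (main_lemma g wv φ hwv l hl b n hn)
  have := hle hv
  rw [mem_comap, hfa] at this
  exact this

/-- Straightening: every vector lies in some `TT k`. -/
lemma spanning (φ : g.Wplus →ₗ⁅ℂ⁆ ℂ) (hwv : g.IsWhittakerVector φ wv)
    (hcyc : LieSubmodule.lieSpan ℂ g.carrier {wv} = ⊤) (v : V) :
    ∃ k, v ∈ TT g wv k := by
  have hdir : Directed (· ≤ ·) (TT g wv) := (TT_mono g wv).directed_le
  have hmem : ∀ u : V, u ∈ (⨆ k, TT g wv k) ↔ ∃ k, u ∈ TT g wv k :=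
    fun u => Submodule.mem_iSup_of_directed _ hdir
  have hbasis : ∀ (i : (Bool × ℤ) ⊕ Unit), ∀ u ∈ (⨆ k, TT g wv k),
      ⁅g.basis i, u⁆ ∈ (⨆ k, TT g wv k) := by
    intro i u hu
    obtain ⟨k, hk⟩ := (hmem u).mp hu
    rcases i with ⟨b, m⟩ | t
    · have hbe : g.basis (Sum.inl (b, m)) = elt g (some (b, m)) := by
        rw [g.basis_eq]; rfl
      rw [hbe]
      rcases le_or_gt m 0 with hm | hm
      · exact (hmem _).mpr ⟨_, lie_mem_TT g wv (some (b, m)) (fun q hq => by cases hq; exact hm) hk⟩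
      · have hk' : u ∈ TT g wv (k + 1) := TT_mono g wv (Nat.le_succ k) hk
        have hs := sub_mem_TT g wv φ hwv b m hm k hk'
        refine (hmem _).mpr ⟨k + 1, ?_⟩
        have hsplit : ⁅elt g (some (b, m)), u⁆
            = (⁅elt g (some (b, m)), u⁆ - φ (pgen g b m hm) • u)
              + φ (pgen g b m hm) • u := by abel
        rw [hsplit]
        exact add_mem (TT_mono g wv (Nat.le_succ k) hs) (smul_mem _ _ hk')
    · have hbe : g.basis (Sum.inr t) = g.z := by rw [g.basis_eq]; rfl
      rw [hbe, ← elt_none]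
      exact (hmem _).mpr ⟨k, by simpa using lie_mem_TT g wv none (fun q hq => by cases hq) hk⟩
  have hclose : ∀ (y : g.carrier), ∀ u ∈ (⨆ k, TT g wv k), ⁅y, u⁆ ∈ (⨆ k, TT g wv k) := by
    intro y u hu
    have hy : y ∈ span ℂ (Set.range g.basis) := by rw [g.basis.span_eq]; trivial
    induction hy using span_induction with
    | mem a ha =>
      obtain ⟨i, rfl⟩ := ha
      exact hbasis i u hu
    | zero => rw [zero_lie]; exact zero_mem _
    | add a b _ _ iha ihb => rw [add_lie]; exact add_mem iha ihb
    | smul t a _ iha => rw [smul_lie]; exact smul_mem _ _ iha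
  let PN : LieSubmodule ℂ g.carrier V :=
    { ⨆ k, TT g wv k with lie_mem := fun {y u} hu => hclose y u hu }
  have hwvP : wv ∈ PN := by
    show wv ∈ (⨆ k, TT g wv k)
    exact (hmem wv).mpr ⟨1, by
      have := mon_mem_TT g wv (l := []) (k := 1) (fun e he => by cases he) (by simp)
      simpa using this⟩
  have htop : (⊤ : LieSubmodule ℂ g.carrier V) ≤ PN :=
    hcyc ▸ LieSubmodule.lieSpan_le.mpr (Set.singleton_subset_iff.mpr hwvP)
  exact (hmem v).mp (htop (LieSubmodule.mem_top v))

end W22Aux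

/-- Every nontrivial submodule of a Whittaker module of type `φ` contains a nontrivial
Whittaker submodule of type `φ` (namely the submodule generated by a nonzero Whittaker
vector lying in it). -/
theorem w22_nontrivial_whittaker_submodule (g : W22) (φ : g.Wplus →ₗ⁅ℂ⁆ ℂ)
    (hφ : g.Nonsingular φ) (V : Type) [AddCommGroup V] [Module ℂ V]
    [LieRingModule g.carrier V] [LieModule ℂ g.carrier V] (wv : V)
    (hwv : g.IsWhittakerVector φ wv) (hcyc : LieSubmodule.lieSpan ℂ g.carrier {wv} = ⊤) :
    ∀ N : LieSubmodule ℂ g.carrier V, N ≠ ⊥ →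
      ∃ v : V, v ≠ 0 ∧ v ∈ N ∧ g.IsWhittakerVector φ v ∧
        LieSubmodule.lieSpan ℂ g.carrier {v} ≤ N := by
  intro N hN
  obtain ⟨v0, hv0N, hv0⟩ : ∃ v ∈ N, v ≠ 0 := by
    by_contra h
    push_neg at h
    exact hN ((LieSubmodule.eq_bot_iff N).mpr h)
  obtain ⟨k, hk⟩ := W22Aux.spanning g wv φ hwv hcyc v0
  induction k generalizing v0 with
  | zero =>
    rw [W22Aux.TT_zero] at hk
    exact absurd ((Submodule.mem_bot ℂ).mp hk) hv0
  | succ k ih =>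
    by_cases hwh : g.IsWhittakerVector φ v0
    · exact ⟨v0, hv0, hv0N, hwh, LieSubmodule.lieSpan_le.mpr (Set.singleton_subset_iff.mpr hv0N)⟩
    · by_cases hall : ∀ (b : Bool) (n : ℤ) (hn : 1 ≤ n),
          ⁅W22Aux.elt g (some (b, n)), v0⁆ = φ (W22Aux.pgen g b n hn) • v0
      · exact absurd (W22Aux.crit g φ v0 hall) hwh
      · push_neg at hall
        obtain ⟨b, n, hn, hne⟩ := hall
        have h1 : ⁅W22Aux.elt g (some (b, n)), v0⁆ ∈ N := N.lie_mem hv0N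
        have h2 : φ (W22Aux.pgen g b n hn) • v0 ∈ N := N.smul_mem _ hv0N
        exact ih _ (N.sub_mem h1 h2) (sub_ne_zero.mpr hne)
          (W22Aux.sub_mem_TT g wv φ hwv b n hn k hk)
end
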